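/- Let (M, •, 1) be a cancellative commutative monoid. The subjective composition ⊛ on M × M is associative in the Kleene sense: for all p₁ = (o₁, e₁), p₂ = (o₂, e₂), p₃ = (o₃, e₃) in M × M, the composite (p₁ ⊛ p₂) ⊛ p₃ is defined iff p₁ ⊛ (p₂ ⊛ p₃) is defined, and then both are equal; indeed, both are defined iff there exists e' ∈ M with e₁ = o₂ • o₃ • e', e₂ = o₁ • o₃ • e', and e₃ = o₁ • o₂ • e', in which case both sides equal (o₁ • o₂ • o₃, e'). -/

import Mathlib

/- Subjective composition of (local obligations, environment obligations) pairs over a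
cancellative commutative monoid. -/
open Classical in
noncomputable def scomp {M : Type*} [CancelCommMonoid M] (p q : M × M) : Option (M × M) :=
  if h : ∃ e, p.2 = q.1 * e ∧ q.2 = p.1 * e then some (p.1 * q.1, h.choose) else none

theorem scomp_eq_some {M : Type*} [CancelCommMonoid M] {p q : M × M} {e : M}
    (h1 : p.2 = q.1 * e) (h2 : q.2 = p.1 * e) : scomp p q = some (p.1 * q.1, e) := by
  have hex : ∃ e, p.2 = q.1 * e ∧ q.2 = p.1 * e := ⟨e, h1, h2⟩
  have hc : q.1 * hex.choose = q.1 * e := by rw [← hex.choose_spec.1, h1]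
  unfold scomp
  rw [dif_pos hex, mul_left_cancel hc]

theorem scomp_eq_none {M : Type*} [CancelCommMonoid M] {p q : M × M}
    (h : ¬ ∃ e, p.2 = q.1 * e ∧ q.2 = p.1 * e) : scomp p q = none := by
  unfold scomp; rw [dif_neg h]

theorem scomp_inv {M : Type*} [CancelCommMonoid M] {p q r : M × M}
    (h : scomp p q = some r) : ∃ e, r = (p.1 * q.1, e) ∧ p.2 = q.1 * e ∧ q.2 = p.1 * e := by
  by_cases hex : ∃ e, p.2 = q.1 * e ∧ q.2 = p.1 * e
  · obtain ⟨e, h1, h2⟩ := hex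
    rw [scomp_eq_some h1 h2] at h
    exact ⟨e, (Option.some_injective _ h).symm, h1, h2⟩
  · rw [scomp_eq_none hex] at h; exact absurd h (by simp)

theorem scomp_lhs {M : Type*} [CancelCommMonoid M] {p₁ p₂ p₃ : M × M} {e' : M}
    (h1 : p₁.2 = p₂.1 * p₃.1 * e') (h2 : p₂.2 = p₁.1 * p₃.1 * e')
    (h3 : p₃.2 = p₁.1 * p₂.1 * e') :
    ((scomp p₁ p₂).bind fun p => scomp p p₃) = some (p₁.1 * p₂.1 * p₃.1, e') := by
  have s1 : scomp p₁ p₂ = some (p₁.1 * p₂.1, p₃.1 * e') :=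
    scomp_eq_some (by rw [h1, mul_assoc]) (by rw [h2, mul_assoc])
  rw [s1]
  show scomp (p₁.1 * p₂.1, p₃.1 * e') p₃ = _
  exact scomp_eq_some (p := (p₁.1 * p₂.1, p₃.1 * e')) rfl h3

theorem scomp_rhs {M : Type*} [CancelCommMonoid M] {p₁ p₂ p₃ : M × M} {e' : M}
    (h1 : p₁.2 = p₂.1 * p₃.1 * e') (h2 : p₂.2 = p₁.1 * p₃.1 * e')
    (h3 : p₃.2 = p₁.1 * p₂.1 * e') :
    ((scomp p₂ p₃).bind fun p => scomp p₁ p) = some (p₁.1 * p₂.1 * p₃.1, e') := by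
  have s1 : scomp p₂ p₃ = some (p₂.1 * p₃.1, p₁.1 * e') :=
    scomp_eq_some (by rw [h2]; ac_rfl) (by rw [h3]; ac_rfl)
  rw [s1]
  show scomp p₁ (p₂.1 * p₃.1, p₁.1 * e') = _
  have : scomp p₁ (p₂.1 * p₃.1, p₁.1 * e') = some (p₁.1 * (p₂.1 * p₃.1), e') :=
    scomp_eq_some (q := (p₂.1 * p₃.1, p₁.1 * e')) h1 rfl
  rw [this, ← mul_assoc]

theorem scomp_lhs_some {M : Type*} [CancelCommMonoid M] {p₁ p₂ p₃ : M × M}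
    (h : ((scomp p₁ p₂).bind fun p => scomp p p₃).isSome) :
    ∃ e', p₁.2 = p₂.1 * p₃.1 * e' ∧ p₂.2 = p₁.1 * p₃.1 * e' ∧ p₃.2 = p₁.1 * p₂.1 * e' := by
  rw [Option.isSome_iff_exists] at h
  obtain ⟨r, hr⟩ := h
  rw [Option.bind_eq_some_iff] at hr
  obtain ⟨q, hq, hr⟩ := hr
  obtain ⟨e, rfl, h1, h2⟩ := scomp_inv hq
  obtain ⟨f, _, h3, h4⟩ := scomp_inv hr
  have h3' : e = p₃.1 * f := h3
  have h4' : p₃.2 = p₁.1 * p₂.1 * f := h4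
  exact ⟨f, by rw [h1, h3']; ac_rfl, by rw [h2, h3']; ac_rfl, h4'⟩

theorem scomp_rhs_some {M : Type*} [CancelCommMonoid M] {p₁ p₂ p₃ : M × M}
    (h : ((scomp p₂ p₃).bind fun p => scomp p₁ p).isSome) :
    ∃ e', p₁.2 = p₂.1 * p₃.1 * e' ∧ p₂.2 = p₁.1 * p₃.1 * e' ∧ p₃.2 = p₁.1 * p₂.1 * e' := by
  rw [Option.isSome_iff_exists] at h
  obtain ⟨r, hr⟩ := h
  rw [Option.bind_eq_some_iff] at hr
  obtain ⟨q, hq, hr⟩ := hr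
  obtain ⟨e, rfl, h1, h2⟩ := scomp_inv hq
  obtain ⟨f, _, h3, h4⟩ := scomp_inv hr
  have h3' : p₁.2 = p₂.1 * p₃.1 * f := h3
  have h4' : e = p₁.1 * f := h4
  exact ⟨f, h3', by rw [h1, h4']; ac_rfl, by rw [h2, h4']; ac_rfl⟩

/-- The subjective composition is associative in the Kleene sense, and both sides are
defined exactly when a common witness `e'` exists, in which case both sides equal
`(o₁ * o₂ * o₃, e')`. -/
theorem scomp_assoc {M : Type*} [CancelCommMonoid M] (p₁ p₂ p₃ : M × M) :
    (((scomp p₁ p₂).bind fun p => scomp p p₃).isSome ↔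
      ((scomp p₂ p₃).bind fun p => scomp p₁ p).isSome) ∧
    (((scomp p₁ p₂).bind fun p => scomp p p₃) =
      ((scomp p₂ p₃).bind fun p => scomp p₁ p)) ∧
    (((scomp p₁ p₂).bind fun p => scomp p p₃).isSome ↔
      ∃ e', p₁.2 = p₂.1 * p₃.1 * e' ∧ p₂.2 = p₁.1 * p₃.1 * e' ∧
        p₃.2 = p₁.1 * p₂.1 * e') ∧
    (∀ e' : M, p₁.2 = p₂.1 * p₃.1 * e' → p₂.2 = p₁.1 * p₃.1 * e' →
      p₃.2 = p₁.1 * p₂.1 * e' →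
      ((scomp p₁ p₂).bind fun p => scomp p p₃) = some (p₁.1 * p₂.1 * p₃.1, e') ∧
      ((scomp p₂ p₃).bind fun p => scomp p₁ p) = some (p₁.1 * p₂.1 * p₃.1, e')) := by
  have hL : ((scomp p₁ p₂).bind fun p => scomp p p₃).isSome ↔
      ∃ e', p₁.2 = p₂.1 * p₃.1 * e' ∧ p₂.2 = p₁.1 * p₃.1 * e' ∧ p₃.2 = p₁.1 * p₂.1 * e' :=
    ⟨scomp_lhs_some, fun ⟨e', h1, h2, h3⟩ => by rw [scomp_lhs h1 h2 h3]; rfl⟩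
  have hR : ((scomp p₂ p₃).bind fun p => scomp p₁ p).isSome ↔
      ∃ e', p₁.2 = p₂.1 * p₃.1 * e' ∧ p₂.2 = p₁.1 * p₃.1 * e' ∧ p₃.2 = p₁.1 * p₂.1 * e' :=
    ⟨scomp_rhs_some, fun ⟨e', h1, h2, h3⟩ => by rw [scomp_rhs h1 h2 h3]; rfl⟩
  refine ⟨hL.trans hR.symm, ?_, hL, fun e' h1 h2 h3 =>
    ⟨scomp_lhs h1 h2 h3, scomp_rhs h1 h2 h3⟩⟩
  by_cases h : ∃ e', p₁.2 = p₂.1 * p₃.1 * e' ∧ p₂.2 = p₁.1 * p₃.1 * e' ∧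
      p₃.2 = p₁.1 * p₂.1 * e'
  · obtain ⟨e', h1, h2, h3⟩ := h
    rw [scomp_lhs h1 h2 h3, scomp_rhs h1 h2 h3]
  · have l := Option.not_isSome_iff_eq_none.mp (fun hs => h (hL.mp hs))
    have r := Option.not_isSome_iff_eq_none.mp (fun hs => h (hR.mp hs))
    rw [l, r]
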